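/- arXiv:2605.03240 — 2 statements merged into one kernel-verified Lean document; each statement's English description precedes it below -/
import Mathlib

section
/- In the well-specified case the two losses coincide at the truth: if Q = Q_{θ*}, the Gaussian mixture with density Σ_k α_k q_{θ*_k}, then 𝓛(θ*) = ℓ(θ*); in particular the posterior responsibilities w_k(y) = α_k q_{θ*_k}(y) / Σ_j α_j q_{θ*_j}(y) satisfy the marginal constraints ∫ w_k dQ = α_k and attain the infimum defining 𝓛(θ*). -/
open MeasureTheory

/-- Gaussian density on `ℝ^d` with mean `μ` and covariance `σ² I_d`. -/
noncomputable def gaussDen (d : ℕ) (σ : ℝ) (μ y : EuclideanSpace ℝ (Fin d)) : ℝ :=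
  (2 * Real.pi * σ ^ 2) ^ (-(d : ℝ) / 2) * Real.exp (-‖y - μ‖ ^ 2 / (2 * σ ^ 2))

/-- A responsibility function: a measurable map into `[0,1]^K` whose coordinates sum to one. -/
def IsResp (K d : ℕ) (w : EuclideanSpace ℝ (Fin d) → Fin K → ℝ) : Prop :=
  (∀ k, Measurable fun y => w y k) ∧ (∀ y k, w y k ∈ Set.Icc (0 : ℝ) 1) ∧
    (∀ y, ∑ k, w y k = 1)

/-- The free energy `E_Q(w, θ)`. -/
noncomputable def freeEnergy (K d : ℕ) (σ : ℝ) (α : Fin K → ℝ)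
    (Q : Measure (EuclideanSpace ℝ (Fin d)))
    (w : EuclideanSpace ℝ (Fin d) → Fin K → ℝ)
    (θ : Fin K → EuclideanSpace ℝ (Fin d)) : ℝ :=
  ∫ y, (∑ k, w y k * (Real.log (w y k) - Real.log (α k * gaussDen d σ (θ k) y))) ∂Q

/-- The negative population log-likelihood `ℓ(θ)`. -/
noncomputable def negLogLik (K d : ℕ) (σ : ℝ) (α : Fin K → ℝ)
    (Q : Measure (EuclideanSpace ℝ (Fin d)))
    (θ : Fin K → EuclideanSpace ℝ (Fin d)) : ℝ :=
  -∫ y, Real.log (∑ k, α k * gaussDen d σ (θ k) y) ∂Q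

/-- The entropic optimal transport loss `𝓛(θ)`. -/
noncomputable def entLoss (K d : ℕ) (σ : ℝ) (α : Fin K → ℝ)
    (Q : Measure (EuclideanSpace ℝ (Fin d)))
    (θ : Fin K → EuclideanSpace ℝ (Fin d)) : ℝ :=
  sInf {r : ℝ | ∃ w, IsResp K d w ∧ (∀ k, ∫ y, w y k ∂Q = α k) ∧
    freeEnergy K d σ α Q w θ = r}

/-- The Gaussian mixture measure `Q_{θ*}` with density `Σ_k α_k q_{θ*_k}`. -/
noncomputable def mixMeasure (K d : ℕ) (σ : ℝ) (α : Fin K → ℝ)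
    (θstar : Fin K → EuclideanSpace ℝ (Fin d)) : Measure (EuclideanSpace ℝ (Fin d)) :=
  volume.withDensity fun y => ENNReal.ofReal (∑ k, α k * gaussDen d σ (θstar k) y)

/-- The posterior responsibilities `w_k(y) = α_k q_{θ*_k}(y) / Σ_j α_j q_{θ*_j}(y)`. -/
noncomputable def postResp (K d : ℕ) (σ : ℝ) (α : Fin K → ℝ)
    (θstar : Fin K → EuclideanSpace ℝ (Fin d)) :
    EuclideanSpace ℝ (Fin d) → Fin K → ℝ :=
  fun y k => α k * gaussDen d σ (θstar k) y / ∑ j, α j * gaussDen d σ (θstar j) y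

section Aux
variable {d : ℕ} {σ : ℝ}


variable {d : ℕ} {σ : ℝ}

lemma integrable_rexp_neg_mul_sq_norm' {b : ℝ} (hb : 0 < b) :
    Integrable (fun v : EuclideanSpace ℝ (Fin d) => Real.exp (-b * ‖v‖ ^ 2)) := by
  have h := (GaussianFourier.integrable_cexp_neg_mul_sq_norm_add
    (V := EuclideanSpace ℝ (Fin d)) (b := (b : ℂ)) (by simpa using hb) 0 0).norm
  refine h.congr ?_
  filter_upwards with v
  rw [Complex.norm_exp]
  norm_num [← Complex.ofReal_pow]

lemma integrable_sq_mul_rexp {b : ℝ} (hb : 0 < b) :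
    Integrable (fun v : EuclideanSpace ℝ (Fin d) => ‖v‖ ^ 2 * Real.exp (-b * ‖v‖ ^ 2)) := by
  have key : ∀ t : ℝ, 0 ≤ t → t * Real.exp (-b * t) ≤ (2 / b) * Real.exp (-(b / 2) * t) := by
    intro t ht
    have h1 : b / 2 * t ≤ Real.exp (b / 2 * t) := (Real.add_one_le_exp _).trans' (by linarith)
    have h2 : t ≤ 2 / b * Real.exp (b / 2 * t) := by
      rw [div_mul_eq_mul_div, le_div_iff₀ hb]
      nlinarith
    calc t * Real.exp (-b * t) ≤ (2 / b * Real.exp (b / 2 * t)) * Real.exp (-b * t) :=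
          mul_le_mul_of_nonneg_right h2 (Real.exp_pos _).le
      _ = (2 / b) * Real.exp (-(b / 2) * t) := by
          rw [mul_assoc, ← Real.exp_add]; ring_nf
  refine (((integrable_rexp_neg_mul_sq_norm' (d := d) (half_pos hb)).const_mul
    (2 / b)).mono' (Continuous.aestronglyMeasurable (by fun_prop)) ?_)
  filter_upwards with v
  rw [Real.norm_eq_abs, abs_of_nonneg (by positivity)]
  simpa using key (‖v‖ ^ 2) (by positivity)

lemma gaussDen_pos (hσ : 0 < σ) (μ y : EuclideanSpace ℝ (Fin d)) : 0 < gaussDen d σ μ y := by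
  have h : (0:ℝ) < 2 * Real.pi * σ ^ 2 := by positivity
  exact mul_pos (Real.rpow_pos_of_pos h _) (Real.exp_pos _)

lemma gaussDen_cont (μ : EuclideanSpace ℝ (Fin d)) : Continuous (gaussDen d σ μ) := by
  unfold gaussDen; fun_prop

lemma gaussDen_le (hσ : 0 < σ) (μ y : EuclideanSpace ℝ (Fin d)) :
    gaussDen d σ μ y ≤ (2 * Real.pi * σ ^ 2) ^ (-(d : ℝ) / 2) := by
  have h0 : (0:ℝ) < 2 * Real.pi * σ ^ 2 := by positivity
  have h : Real.exp (-‖y - μ‖ ^ 2 / (2 * σ ^ 2)) ≤ 1 := by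
    rw [Real.exp_le_one_iff]
    exact div_nonpos_of_nonpos_of_nonneg (neg_nonpos.mpr (by positivity)) (by positivity)
  exact mul_le_of_le_one_right (Real.rpow_pos_of_pos h0 _).le h

lemma gaussDen_eq (hσ : 0 < σ) (μ y : EuclideanSpace ℝ (Fin d)) :
    gaussDen d σ μ y = (2 * Real.pi * σ ^ 2) ^ (-(d : ℝ) / 2) *
      Real.exp (-(2 * σ ^ 2)⁻¹ * ‖y - μ‖ ^ 2) := by
  unfold gaussDen
  congr 2
  field_simp

lemma integrable_gaussDen (hσ : 0 < σ) (μ : EuclideanSpace ℝ (Fin d)) :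
    Integrable (gaussDen d σ μ) := by
  have hb : (0:ℝ) < (2 * σ ^ 2)⁻¹ := by positivity
  have h2 := ((integrable_rexp_neg_mul_sq_norm' hb).comp_sub_right μ).const_mul
    ((2 * Real.pi * σ ^ 2) ^ (-(d : ℝ) / 2))
  refine h2.congr ?_
  filter_upwards with y
  rw [gaussDen_eq hσ]

lemma integral_gaussDen (hσ : 0 < σ) (μ : EuclideanSpace ℝ (Fin d)) :
    ∫ y, gaussDen d σ μ y = 1 := by
  have hb : (0:ℝ) < (2 * σ ^ 2)⁻¹ := by positivity
  have h0 : (0:ℝ) < 2 * Real.pi * σ ^ 2 := by positivity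
  calc ∫ y, gaussDen d σ μ y
      = ∫ y, (2 * Real.pi * σ ^ 2) ^ (-(d : ℝ) / 2) *
          Real.exp (-(2 * σ ^ 2)⁻¹ * ‖y - μ‖ ^ 2) := by
        congr 1; ext y; rw [gaussDen_eq hσ]
    _ = (2 * Real.pi * σ ^ 2) ^ (-(d : ℝ) / 2) *
          ∫ y : EuclideanSpace ℝ (Fin d), Real.exp (-(2 * σ ^ 2)⁻¹ * ‖y - μ‖ ^ 2) := by
        rw [integral_const_mul]
    _ = (2 * Real.pi * σ ^ 2) ^ (-(d : ℝ) / 2) *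
          ∫ y : EuclideanSpace ℝ (Fin d), Real.exp (-(2 * σ ^ 2)⁻¹ * ‖y‖ ^ 2) := by
        rw [integral_sub_right_eq_self
          (fun y : EuclideanSpace ℝ (Fin d) => Real.exp (-(2 * σ ^ 2)⁻¹ * ‖y‖ ^ 2)) μ]
    _ = (2 * Real.pi * σ ^ 2) ^ (-(d : ℝ) / 2) * (2 * Real.pi * σ ^ 2) ^ ((d : ℝ) / 2) := by
        rw [GaussianFourier.integral_rexp_neg_mul_sq_norm hb]
        congr 1
        rw [finrank_euclideanSpace_fin]
        congr 1
        field_simp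
    _ = 1 := by
        rw [← Real.rpow_add h0]
        have h : -(d:ℝ) / 2 + (d:ℝ) / 2 = 0 := by ring
        rw [h, Real.rpow_zero]

lemma integrable_sq_gaussDen (hσ : 0 < σ) (c μ : EuclideanSpace ℝ (Fin d)) :
    Integrable (fun y => ‖y - c‖ ^ 2 * gaussDen d σ μ y) := by
  have hb : (0:ℝ) < (2 * σ ^ 2)⁻¹ := by positivity
  set C : ℝ := (2 * Real.pi * σ ^ 2) ^ (-(d : ℝ) / 2) with hC
  have hCpos : 0 < C := Real.rpow_pos_of_pos (by positivity) _
  have hdom : Integrable (fun y : EuclideanSpace ℝ (Fin d) =>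
      2 * C * (‖y - μ‖ ^ 2 * Real.exp (-(2 * σ ^ 2)⁻¹ * ‖y - μ‖ ^ 2))
      + 2 * ‖μ - c‖ ^ 2 * gaussDen d σ μ y) :=
    (((integrable_sq_mul_rexp hb).comp_sub_right μ).const_mul (2 * C)).add
      ((integrable_gaussDen hσ μ).const_mul (2 * ‖μ - c‖ ^ 2))
  refine hdom.mono' (Continuous.aestronglyMeasurable ?_) ?_
  · have := gaussDen_cont (σ := σ) μ
    fun_prop
  filter_upwards with y
  have hg := gaussDen_pos hσ μ y
  rw [Real.norm_eq_abs, abs_of_nonneg (by positivity)]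
  have htri : ‖y - c‖ ≤ ‖y - μ‖ + ‖μ - c‖ := by
    have := dist_triangle y μ c
    simpa [dist_eq_norm] using this
  have hsq : ‖y - c‖ ^ 2 ≤ 2 * ‖y - μ‖ ^ 2 + 2 * ‖μ - c‖ ^ 2 := by
    nlinarith [norm_nonneg (y - c), norm_nonneg (y - μ), norm_nonneg (μ - c),
      sq_nonneg (‖y - μ‖ - ‖μ - c‖)]
  have h1 : ‖y - c‖ ^ 2 * gaussDen d σ μ y ≤
      (2 * ‖y - μ‖ ^ 2 + 2 * ‖μ - c‖ ^ 2) * gaussDen d σ μ y :=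
    mul_le_mul_of_nonneg_right hsq hg.le
  refine h1.trans (le_of_eq ?_)
  rw [gaussDen_eq hσ]
  ring

lemma term_gibbs {t p : ℝ} (ht : 0 ≤ t) (hp : 0 < p) :
    t - p ≤ t * (Real.log t - Real.log p) := by
  rcases eq_or_lt_of_le ht with h | h
  · simp [← h, hp.le]
  · have h1 := Real.log_le_sub_one_of_pos (div_pos hp h)
    rw [Real.log_div hp.ne' h.ne'] at h1
    have h2 : t * (Real.log p - Real.log t) ≤ t * (p / t - 1) :=
      mul_le_mul_of_nonneg_left h1 ht
    have h3 : t * (p / t - 1) = p - t := by field_simp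
    nlinarith

lemma abs_mul_log_le_one {t : ℝ} (h0 : 0 ≤ t) (h1 : t ≤ 1) : |t * Real.log t| ≤ 1 := by
  rcases eq_or_lt_of_le h0 with h | h
  · simp [← h]
  · have hlog : Real.log t ≤ 0 := Real.log_nonpos h0 h1
    have h2 := Real.log_le_sub_one_of_pos (show (0:ℝ) < t⁻¹ by positivity)
    rw [Real.log_inv] at h2
    have h3 : -(t * Real.log t) ≤ 1 - t := by
      have h4 := mul_le_mul_of_nonneg_left h2 h0
      have ht : t * t⁻¹ = 1 := mul_inv_cancel₀ h.ne'
      nlinarith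
    rw [abs_of_nonpos (mul_nonpos_of_nonneg_of_nonpos h0 hlog)]
    linarith

end Aux

/-- in the well-specified case, `𝓛(θ*) = ℓ(θ*)`, and the posterior
responsibilities satisfy the marginal constraints and attain the infimum defining `𝓛(θ*)`. -/
theorem entLoss_eq_negLogLik_wellSpecified
    (K d : ℕ) (hK : 1 ≤ K) (hd : 1 ≤ d) (σ : ℝ) (hσ : 0 < σ)
    (α : Fin K → ℝ) (hα : ∀ k, α k ∈ Set.Ioo (0 : ℝ) 1) (hαsum : ∑ k, α k = 1)
    (θstar : Fin K → EuclideanSpace ℝ (Fin d)) :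
    (∀ k, ∫ y, postResp K d σ α θstar y k ∂(mixMeasure K d σ α θstar) = α k) ∧
    freeEnergy K d σ α (mixMeasure K d σ α θstar) (postResp K d σ α θstar) θstar
      = entLoss K d σ α (mixMeasure K d σ α θstar) θstar ∧
    entLoss K d σ α (mixMeasure K d σ α θstar) θstar
      = negLogLik K d σ α (mixMeasure K d σ α θstar) θstar := by
  classical
  haveI : NeZero K := ⟨by omega⟩
  set k0 : Fin K := ⟨0, by omega⟩ with hk0
  have hα0 : ∀ k, 0 < α k := fun k => (hα k).1
  have hqpos : ∀ (k : Fin K) y, 0 < gaussDen d σ (θstar k) y := fun k y => gaussDen_pos hσ _ y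
  have hSpos : ∀ y, 0 < ∑ k, α k * gaussDen d σ (θstar k) y := fun y =>
    Finset.sum_pos (fun k _ => mul_pos (hα0 k) (hqpos k y)) Finset.univ_nonempty
  have hScont : Continuous fun y : EuclideanSpace ℝ (Fin d) =>
      ∑ k, α k * gaussDen d σ (θstar k) y := by
    apply continuous_finset_sum
    intro k _
    exact continuous_const.mul (gaussDen_cont (θstar k))
  have hSmeas := hScont.measurable
  -- transfer of integrals from the mixture measure to Lebesgue
  have htrans : ∀ g : EuclideanSpace ℝ (Fin d) → ℝ,
      ∫ y, g y ∂(mixMeasure K d σ α θstar)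
        = ∫ y, (∑ k, α k * gaussDen d σ (θstar k) y) * g y := by
    intro g
    have hQ : mixMeasure K d σ α θstar = volume.withDensity
        (fun y => ((fun y => (∑ k, α k * gaussDen d σ (θstar k) y).toNNReal) y : ENNReal)) := rfl
    rw [hQ, integral_withDensity_eq_integral_smul hSmeas.real_toNNReal g]
    congr 1
    funext y
    simp [NNReal.smul_def, Real.coe_toNNReal _ (hSpos y).le]
  have hIntIff : ∀ g : EuclideanSpace ℝ (Fin d) → ℝ,
      Integrable g (mixMeasure K d σ α θstar) ↔
        Integrable (fun y => (∑ k, α k * gaussDen d σ (θstar k) y) * g y) volume := by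
    intro g
    have hQ : mixMeasure K d σ α θstar = volume.withDensity
        (fun y => ((fun y => (∑ k, α k * gaussDen d σ (θstar k) y).toNNReal) y : ENNReal)) := rfl
    rw [hQ, integrable_withDensity_iff_integrable_smul hSmeas.real_toNNReal]
    apply integrable_congr
    filter_upwards with y
    simp [NNReal.smul_def, Real.coe_toNNReal _ (hSpos y).le]
  have hSint : Integrable
      (fun y : EuclideanSpace ℝ (Fin d) => ∑ k, α k * gaussDen d σ (θstar k) y) :=
    integrable_finset_sum _ fun k _ => (integrable_gaussDen hσ (θstar k)).const_mul (α k)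
  haveI hQfin : IsFiniteMeasure (mixMeasure K d σ α θstar) := by
    unfold mixMeasure
    exact isFiniteMeasure_withDensity_ofReal hSint.hasFiniteIntegral
  -- second moments of Q
  have hQsq : ∀ c : EuclideanSpace ℝ (Fin d),
      Integrable (fun y => ‖y - c‖ ^ 2) (mixMeasure K d σ α θstar) := by
    intro c
    rw [hIntIff]
    have h : Integrable (fun y : EuclideanSpace ℝ (Fin d) =>
        ∑ k, α k * (‖y - c‖ ^ 2 * gaussDen d σ (θstar k) y)) volume :=
      integrable_finset_sum _ fun k _ => (integrable_sq_gaussDen hσ c (θstar k)).const_mul (α k)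
    refine h.congr ?_
    filter_upwards with y
    rw [Finset.sum_mul]
    exact Finset.sum_congr rfl fun k _ => by ring
  set C : ℝ := (2 * Real.pi * σ ^ 2) ^ (-(d : ℝ) / 2) with hCdef
  have hCpos : 0 < C := Real.rpow_pos_of_pos (by positivity) _
  have hlogq : ∀ (k : Fin K) y, Real.log (α k * gaussDen d σ (θstar k) y)
      = Real.log (α k) + Real.log C + -‖y - θstar k‖ ^ 2 / (2 * σ ^ 2) := by
    intro k y
    unfold gaussDen
    rw [Real.log_mul (hα0 k).ne' (mul_pos hCpos (Real.exp_pos _)).ne',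
      Real.log_mul hCpos.ne' (Real.exp_pos _).ne', Real.log_exp]
    ring
  have hQlogq : ∀ k : Fin K, Integrable
      (fun y => Real.log (α k * gaussDen d σ (θstar k) y)) (mixMeasure K d σ α θstar) := by
    intro k
    have h : Integrable (fun y : EuclideanSpace ℝ (Fin d) =>
        (Real.log (α k) + Real.log C) + (-(2 * σ ^ 2)⁻¹) * ‖y - θstar k‖ ^ 2)
        (mixMeasure K d σ α θstar) :=
      (integrable_const _).add ((hQsq (θstar k)).const_mul _)
    refine h.congr ?_
    filter_upwards with y
    rw [hlogq k y]
    ring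
  have hSleC : ∀ y, (∑ k, α k * gaussDen d σ (θstar k) y) ≤ C := by
    intro y
    calc ∑ k, α k * gaussDen d σ (θstar k) y ≤ ∑ k, α k * C :=
          Finset.sum_le_sum fun k _ =>
            mul_le_mul_of_nonneg_left (gaussDen_le hσ (θstar k) y) (hα0 k).le
      _ = C := by rw [← Finset.sum_mul, hαsum, one_mul]
  have hQlogS : Integrable
      (fun y => Real.log (∑ k, α k * gaussDen d σ (θstar k) y)) (mixMeasure K d σ α θstar) := by
    have hG : Integrable (fun y : EuclideanSpace ℝ (Fin d) =>
        |Real.log (α k0 * gaussDen d σ (θstar k0) y)| + |Real.log C|)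
        (mixMeasure K d σ α θstar) := (hQlogq k0).abs.add (integrable_const _)
    refine hG.mono' (Real.measurable_log.comp hSmeas).aestronglyMeasurable ?_
    filter_upwards with y
    rw [Real.norm_eq_abs, abs_le]
    have hub : Real.log (∑ k, α k * gaussDen d σ (θstar k) y) ≤ Real.log C :=
      Real.log_le_log (hSpos y) (hSleC y)
    have hlb2 : Real.log (α k0 * gaussDen d σ (θstar k0) y)
        ≤ Real.log (∑ k, α k * gaussDen d σ (θstar k) y) :=
      Real.log_le_log (mul_pos (hα0 k0) (hqpos k0 y))
        (Finset.single_le_sum (f := fun k => α k * gaussDen d σ (θstar k) y)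
          (fun k _ => (mul_pos (hα0 k) (hqpos k y)).le) (Finset.mem_univ k0))
    constructor
    · have := neg_abs_le (Real.log (α k0 * gaussDen d σ (θstar k0) y))
      have h2 := abs_nonneg (Real.log C)
      linarith
    · have := le_abs_self (Real.log C)
      have h2 := abs_nonneg (Real.log (α k0 * gaussDen d σ (θstar k0) y))
      linarith
  have hsum1 : ∀ y, ∑ k, α k * gaussDen d σ (θstar k) y
      / (∑ j, α j * gaussDen d σ (θstar j) y) = 1 := by
    intro y
    rw [← Finset.sum_div, div_self (hSpos y).ne']
  -- posterior responsibilities form a responsibility function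
  have hResp : IsResp K d (postResp K d σ α θstar) := by
    refine ⟨fun k => ?_, fun y k => ⟨?_, ?_⟩, fun y => ?_⟩
    · exact (((gaussDen_cont (θstar k)).measurable).const_mul (α k)).div hSmeas
    · exact div_nonneg (mul_pos (hα0 k) (hqpos k y)).le (hSpos y).le
    · unfold postResp
      rw [div_le_one (hSpos y)]
      exact Finset.single_le_sum (f := fun j => α j * gaussDen d σ (θstar j) y)
        (fun j _ => (mul_pos (hα0 j) (hqpos j y)).le) (Finset.mem_univ k)
    · simpa only [postResp] using hsum1 y
  -- marginal constraints
  have hmarg : ∀ k, ∫ y, postResp K d σ α θstar y k ∂(mixMeasure K d σ α θstar) = α k := by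
    intro k
    calc ∫ y, postResp K d σ α θstar y k ∂(mixMeasure K d σ α θstar)
        = ∫ y, (∑ j, α j * gaussDen d σ (θstar j) y) * postResp K d σ α θstar y k :=
          htrans _
      _ = ∫ y, α k * gaussDen d σ (θstar k) y := by
          congr 1
          funext y
          simp only [postResp]
          rw [mul_comm, div_mul_cancel₀ _ (hSpos y).ne']
      _ = α k := by rw [integral_const_mul, integral_gaussDen hσ, mul_one]
  -- free energy at the posterior equals the negative log-likelihood
  have hfeq : freeEnergy K d σ α (mixMeasure K d σ α θstar) (postResp K d σ α θstar) θstar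
      = negLogLik K d σ α (mixMeasure K d σ α θstar) θstar := by
    unfold freeEnergy negLogLik
    rw [← integral_neg]
    congr 1
    funext y
    have hlogp : ∀ k : Fin K, Real.log (postResp K d σ α θstar y k)
        = Real.log (α k * gaussDen d σ (θstar k) y)
          - Real.log (∑ j, α j * gaussDen d σ (θstar j) y) := fun k =>
      Real.log_div (mul_pos (hα0 k) (hqpos k y)).ne' (hSpos y).ne'
    calc ∑ k, postResp K d σ α θstar y k * (Real.log (postResp K d σ α θstar y k)
          - Real.log (α k * gaussDen d σ (θstar k) y))
        = ∑ k, postResp K d σ α θstar y k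
            * (-Real.log (∑ j, α j * gaussDen d σ (θstar j) y)) := by
          refine Finset.sum_congr rfl fun k _ => ?_
          rw [hlogp k]; ring
      _ = (∑ k, postResp K d σ α θstar y k)
            * (-Real.log (∑ j, α j * gaussDen d σ (θstar j) y)) := by
          rw [Finset.sum_mul]
      _ = -Real.log (∑ k, α k * gaussDen d σ (θstar k) y) := by
          rw [show (∑ k, postResp K d σ α θstar y k) = 1 from by
            simpa only [postResp] using hsum1 y, one_mul]
  -- lower bound for every feasible responsibility function
  have hlb : ∀ r ∈ {r : ℝ | ∃ w, IsResp K d w ∧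
      (∀ k, ∫ y, w y k ∂(mixMeasure K d σ α θstar) = α k) ∧
      freeEnergy K d σ α (mixMeasure K d σ α θstar) w θstar = r},
      negLogLik K d σ α (mixMeasure K d σ α θstar) θstar ≤ r := by
    rintro r ⟨w, ⟨hwmeas, hwIcc, hwsum⟩, -, rfl⟩
    have hFmeas : Measurable fun y => ∑ k, w y k
        * (Real.log (w y k) - Real.log (α k * gaussDen d σ (θstar k) y)) := by
      apply Finset.measurable_sum
      intro k _
      exact (hwmeas k).mul (((hwmeas k).log).sub
        ((((gaussDen_cont (θstar k)).measurable).const_mul (α k)).log))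
    have hFbound : ∀ y, |∑ k, w y k
        * (Real.log (w y k) - Real.log (α k * gaussDen d σ (θstar k) y))|
        ≤ (K : ℝ) + ∑ k, |Real.log (α k * gaussDen d σ (θstar k) y)| := by
      intro y
      calc |∑ k, w y k * (Real.log (w y k) - Real.log (α k * gaussDen d σ (θstar k) y))|
          ≤ ∑ k, |w y k * (Real.log (w y k) - Real.log (α k * gaussDen d σ (θstar k) y))| :=
            Finset.abs_sum_le_sum_abs _ _
        _ ≤ ∑ k, (1 + |Real.log (α k * gaussDen d σ (θstar k) y)|) := by
            refine Finset.sum_le_sum fun k _ => ?_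
            have h1 : |w y k * Real.log (w y k)| ≤ 1 :=
              abs_mul_log_le_one (hwIcc y k).1 (hwIcc y k).2
            have h2 : |w y k * Real.log (α k * gaussDen d σ (θstar k) y)|
                ≤ |Real.log (α k * gaussDen d σ (θstar k) y)| := by
              rw [abs_mul]
              have hw1 : |w y k| ≤ 1 := abs_le.mpr ⟨by linarith [(hwIcc y k).1], (hwIcc y k).2⟩
              nlinarith [abs_nonneg (Real.log (α k * gaussDen d σ (θstar k) y)),
                abs_nonneg (w y k)]
            calc |w y k * (Real.log (w y k) - Real.log (α k * gaussDen d σ (θstar k) y))|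
                = |w y k * Real.log (w y k)
                    + -(w y k * Real.log (α k * gaussDen d σ (θstar k) y))| := by ring_nf
              _ ≤ |w y k * Real.log (w y k)|
                    + |-(w y k * Real.log (α k * gaussDen d σ (θstar k) y))| := abs_add_le _ _
              _ ≤ 1 + |Real.log (α k * gaussDen d σ (θstar k) y)| := by
                  rw [abs_neg]; exact add_le_add h1 h2
        _ = (K : ℝ) + ∑ k, |Real.log (α k * gaussDen d σ (θstar k) y)| := by
            rw [Finset.sum_add_distrib, Finset.sum_const, Finset.card_univ, Fintype.card_fin]
            simp
    have hGint : Integrable (fun y =>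
        (K : ℝ) + ∑ k, |Real.log (α k * gaussDen d σ (θstar k) y)|)
        (mixMeasure K d σ α θstar) :=
      (integrable_const _).add (integrable_finset_sum _ fun k _ => (hQlogq k).abs)
    have hFint : Integrable (fun y => ∑ k, w y k
        * (Real.log (w y k) - Real.log (α k * gaussDen d σ (θstar k) y)))
        (mixMeasure K d σ α θstar) := by
      refine hGint.mono' hFmeas.aestronglyMeasurable ?_
      filter_upwards with y
      rw [Real.norm_eq_abs]
      exact hFbound y
    have hpoint : ∀ y, -Real.log (∑ k, α k * gaussDen d σ (θstar k) y)
        ≤ ∑ k, w y k * (Real.log (w y k) - Real.log (α k * gaussDen d σ (θstar k) y)) := by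
      intro y
      have h0 : (0:ℝ) ≤ ∑ k, w y k * (Real.log (w y k)
          - Real.log (α k * gaussDen d σ (θstar k) y
            / ∑ j, α j * gaussDen d σ (θstar j) y)) := by
        calc (0:ℝ) = ∑ k, (w y k - α k * gaussDen d σ (θstar k) y
              / ∑ j, α j * gaussDen d σ (θstar j) y) := by
              rw [Finset.sum_sub_distrib, hwsum y, hsum1 y, sub_self]
          _ ≤ _ := Finset.sum_le_sum fun k _ => term_gibbs (hwIcc y k).1
              (div_pos (mul_pos (hα0 k) (hqpos k y)) (hSpos y))
      have hkey : ∀ k : Fin K, w y k * (Real.log (w y k)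
          - Real.log (α k * gaussDen d σ (θstar k) y / ∑ j, α j * gaussDen d σ (θstar j) y))
          = w y k * (Real.log (w y k) - Real.log (α k * gaussDen d σ (θstar k) y))
            + w y k * Real.log (∑ j, α j * gaussDen d σ (θstar j) y) := by
        intro k
        rw [Real.log_div (mul_pos (hα0 k) (hqpos k y)).ne' (hSpos y).ne']
        ring
      have hsplit : ∑ k, w y k * (Real.log (w y k)
          - Real.log (α k * gaussDen d σ (θstar k) y / ∑ j, α j * gaussDen d σ (θstar j) y))
          = (∑ k, w y k * (Real.log (w y k) - Real.log (α k * gaussDen d σ (θstar k) y)))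
            + Real.log (∑ j, α j * gaussDen d σ (θstar j) y) := by
        rw [Finset.sum_congr rfl fun k _ => hkey k, Finset.sum_add_distrib,
          ← Finset.sum_mul, hwsum y, one_mul]
      rw [hsplit] at h0
      linarith
    have hle := integral_mono hQlogS.neg hFint hpoint
    unfold negLogLik freeEnergy
    rw [← integral_neg]
    exact hle
  have hmem : negLogLik K d σ α (mixMeasure K d σ α θstar) θstar ∈
      {r : ℝ | ∃ w, IsResp K d w ∧
        (∀ k, ∫ y, w y k ∂(mixMeasure K d σ α θstar) = α k) ∧
        freeEnergy K d σ α (mixMeasure K d σ α θstar) w θstar = r} :=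
    ⟨postResp K d σ α θstar, hResp, hmarg, hfeq⟩
  have hEnt : entLoss K d σ α (mixMeasure K d σ α θstar) θstar
      = negLogLik K d σ α (mixMeasure K d σ α θstar) θstar := by
    unfold entLoss
    exact le_antisymm
      (csInf_le ⟨negLogLik K d σ α (mixMeasure K d σ α θstar) θstar,
        fun r hr => hlb r hr⟩ hmem)
      (le_csInf ⟨_, hmem⟩ hlb)
  exact ⟨hmarg, hfeq.trans hEnt.symm, hEnt⟩
end

section
/- The semi-dual objective is strictly concave in the potentials modulo constants: for each fixed θ ∈ (ℝ^d)^K, the function ω ↦ 𝓛̃(θ,ω) := Σ_k α_k ω_k - ∫ log(Σ_k α_k e^{ω_k} q_{θ_k}(y)) dQ(y) is strictly concave on the hyperplane {ω ∈ ℝ^K : ω_K = 0}; that is, for ω ≠ ω' with ω_K = ω'_K = 0 and t ∈ (0,1), 𝓛̃(θ, tω + (1-t)ω') > t 𝓛̃(θ,ω) + (1-t) 𝓛̃(θ,ω'). -/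
open MeasureTheory

/-- The semi-dual objective `𝓛̃(θ, ω)`. -/
noncomputable def semiDual (K d : ℕ) (σ : ℝ) (α : Fin K → ℝ)
    (Q : Measure (EuclideanSpace ℝ (Fin d)))
    (θ : Fin K → EuclideanSpace ℝ (Fin d)) (ω : Fin K → ℝ) : ℝ :=
  ∑ k, α k * ω k -
    ∫ y, Real.log (∑ k, α k * Real.exp (ω k) * gaussDen d σ (θ k) y) ∂Q

/-- Weighted AM-GM (Young), non-strict. -/
lemma aux_young_le {t x y : ℝ} (ht : t ∈ Set.Ioo (0:ℝ) 1) (hx : 0 < x) (hy : 0 < y) :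
    x ^ t * y ^ (1 - t) ≤ t * x + (1 - t) * y := by
  have h := convexOn_exp.2 (Set.mem_univ (Real.log x)) (Set.mem_univ (Real.log y))
    ht.1.le (show (0:ℝ) ≤ 1 - t by linarith [ht.2]) (show t + (1 - t) = 1 by ring)
  simp only [smul_eq_mul] at h
  calc x ^ t * y ^ (1 - t)
      = Real.exp (t * Real.log x + (1 - t) * Real.log y) := by
        rw [Real.exp_add, Real.rpow_def_of_pos hx, Real.rpow_def_of_pos hy,
          mul_comm (Real.log x) t, mul_comm (Real.log y) (1 - t)]
    _ ≤ t * Real.exp (Real.log x) + (1 - t) * Real.exp (Real.log y) := h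
    _ = t * x + (1 - t) * y := by rw [Real.exp_log hx, Real.exp_log hy]

/-- Weighted AM-GM (Young), strict. -/
lemma aux_young_lt {t x y : ℝ} (ht : t ∈ Set.Ioo (0:ℝ) 1) (hx : 0 < x) (hy : 0 < y)
    (hxy : x ≠ y) : x ^ t * y ^ (1 - t) < t * x + (1 - t) * y := by
  have hlog : Real.log x ≠ Real.log y := fun h =>
    hxy (by rw [← Real.exp_log hx, ← Real.exp_log hy, h])
  have h := strictConvexOn_exp.2 (Set.mem_univ (Real.log x)) (Set.mem_univ (Real.log y))
    hlog ht.1 (show (0:ℝ) < 1 - t by linarith [ht.2]) (show t + (1 - t) = 1 by ring)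
  simp only [smul_eq_mul] at h
  calc x ^ t * y ^ (1 - t)
      = Real.exp (t * Real.log x + (1 - t) * Real.log y) := by
        rw [Real.exp_add, Real.rpow_def_of_pos hx, Real.rpow_def_of_pos hy,
          mul_comm (Real.log x) t, mul_comm (Real.log y) (1 - t)]
    _ < t * Real.exp (Real.log x) + (1 - t) * Real.exp (Real.log y) := h
    _ = t * x + (1 - t) * y := by rw [Real.exp_log hx, Real.exp_log hy]

/-- Strict Hölder inequality for finite sums. -/
lemma aux_holder_strict {K : ℕ} (a b : Fin K → ℝ) (ha : ∀ k, 0 < a k) (hb : ∀ k, 0 < b k)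
    {t : ℝ} (ht : t ∈ Set.Ioo (0:ℝ) 1) (j : Fin K)
    (hj : a j / (∑ k, a k) ≠ b j / (∑ k, b k)) :
    ∑ k, (a k) ^ t * (b k) ^ (1 - t) < (∑ k, a k) ^ t * (∑ k, b k) ^ (1 - t) := by
  set A := ∑ k, a k with hA_def
  set B := ∑ k, b k with hB_def
  have hA : 0 < A := Finset.sum_pos (fun k _ => ha k) ⟨j, Finset.mem_univ j⟩
  have hB : 0 < B := Finset.sum_pos (fun k _ => hb k) ⟨j, Finset.mem_univ j⟩
  have hAB : 0 < A ^ t * B ^ (1 - t) :=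
    mul_pos (Real.rpow_pos_of_pos hA t) (Real.rpow_pos_of_pos hB (1 - t))
  have key : ∀ k : Fin K,
      (a k) ^ t * (b k) ^ (1 - t)
        = A ^ t * B ^ (1 - t) * ((a k / A) ^ t * (b k / B) ^ (1 - t)) := by
    intro k
    rw [Real.div_rpow (ha k).le hA.le, Real.div_rpow (hb k).le hB.le]
    have h1 : A ^ t ≠ 0 := (Real.rpow_pos_of_pos hA t).ne'
    have h2 : B ^ (1 - t) ≠ 0 := (Real.rpow_pos_of_pos hB (1 - t)).ne'
    field_simp
  have hsum : ∑ k, ((a k / A) ^ t * (b k / B) ^ (1 - t))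
      < ∑ k, (t * (a k / A) + (1 - t) * (b k / B)) := by
    apply Finset.sum_lt_sum
    · intro k _
      exact aux_young_le ht (div_pos (ha k) hA) (div_pos (hb k) hB)
    · exact ⟨j, Finset.mem_univ j,
        aux_young_lt ht (div_pos (ha j) hA) (div_pos (hb j) hB) hj⟩
  have hsum2 : ∑ k, (t * (a k / A) + (1 - t) * (b k / B)) = 1 := by
    rw [Finset.sum_add_distrib, ← Finset.mul_sum, ← Finset.mul_sum,
      ← Finset.sum_div, ← Finset.sum_div, ← hA_def, ← hB_def,
      div_self hA.ne', div_self hB.ne']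
    ring
  calc ∑ k, (a k) ^ t * (b k) ^ (1 - t)
      = A ^ t * B ^ (1 - t) * ∑ k, ((a k / A) ^ t * (b k / B) ^ (1 - t)) := by
        rw [Finset.mul_sum]; exact Finset.sum_congr rfl fun k _ => key k
    _ < A ^ t * B ^ (1 - t) * ∑ k, (t * (a k / A) + (1 - t) * (b k / B)) :=
        (mul_lt_mul_iff_right₀ hAB).2 hsum
    _ = A ^ t * B ^ (1 - t) := by rw [hsum2, mul_one]

/-- Strict convexity of log-sum-exp along a segment, pointwise. -/
lemma aux_logsum_strict {K : ℕ} (c : Fin K → ℝ) (hc : ∀ k, 0 < c k)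
    (ω ω' : Fin K → ℝ) (hne : ω ≠ ω') (k0 : Fin K) (hk0 : ω k0 = ω' k0)
    {t : ℝ} (ht : t ∈ Set.Ioo (0:ℝ) 1) :
    Real.log (∑ k, c k * Real.exp (t * ω k + (1 - t) * ω' k))
      < t * Real.log (∑ k, c k * Real.exp (ω k)) +
        (1 - t) * Real.log (∑ k, c k * Real.exp (ω' k)) := by
  set a : Fin K → ℝ := fun k => c k * Real.exp (ω k) with ha_def
  set b : Fin K → ℝ := fun k => c k * Real.exp (ω' k) with hb_def
  have ha : ∀ k, 0 < a k := fun k => mul_pos (hc k) (Real.exp_pos _)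
  have hb : ∀ k, 0 < b k := fun k => mul_pos (hc k) (Real.exp_pos _)
  have hA : 0 < ∑ k, a k := Finset.sum_pos (fun k _ => ha k) ⟨k0, Finset.mem_univ k0⟩
  have hB : 0 < ∑ k, b k := Finset.sum_pos (fun k _ => hb k) ⟨k0, Finset.mem_univ k0⟩
  -- find a coordinate witnessing non-proportionality
  have hj : ∃ j, a j / (∑ k, a k) ≠ b j / (∑ k, b k) := by
    by_contra h
    push_neg at h
    have hAB : (∑ k, a k) = ∑ k, b k := by
      have h0 := h k0
      have hab0 : a k0 = b k0 := by simp only [ha_def, hb_def, hk0]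
      rw [hab0] at h0
      have h1 := (div_eq_div_iff hA.ne' hB.ne').1 h0
      exact (mul_left_cancel₀ (hb k0).ne' h1).symm
    apply hne
    funext k
    have hk := h k
    rw [hAB] at hk
    have : a k = b k := by
      field_simp at hk
      exact hk
    have := mul_left_cancel₀ (hc k).ne' this
    exact Real.exp_injective this
  obtain ⟨j, hj⟩ := hj
  have hmid : ∀ k : Fin K, c k * Real.exp (t * ω k + (1 - t) * ω' k)
      = (a k) ^ t * (b k) ^ (1 - t) := by
    intro k
    have hak : Real.log (a k) = Real.log (c k) + ω k := by
      simp only [ha_def]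
      rw [Real.log_mul (hc k).ne' (Real.exp_pos _).ne', Real.log_exp]
    have hbk : Real.log (b k) = Real.log (c k) + ω' k := by
      simp only [hb_def]
      rw [Real.log_mul (hc k).ne' (Real.exp_pos _).ne', Real.log_exp]
    rw [Real.rpow_def_of_pos (ha k), Real.rpow_def_of_pos (hb k), ← Real.exp_add, hak, hbk,
      show (Real.log (c k) + ω k) * t + (Real.log (c k) + ω' k) * (1 - t)
        = Real.log (c k) + (t * ω k + (1 - t) * ω' k) by ring]
    simp [Real.exp_add, Real.exp_log (hc k), mul_assoc]
  have hS : 0 < ∑ k, c k * Real.exp (t * ω k + (1 - t) * ω' k) :=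
    Finset.sum_pos (fun k _ => mul_pos (hc k) (Real.exp_pos _)) ⟨k0, Finset.mem_univ k0⟩
  have hlt : ∑ k, c k * Real.exp (t * ω k + (1 - t) * ω' k)
      < (∑ k, a k) ^ t * (∑ k, b k) ^ (1 - t) := by
    calc ∑ k, c k * Real.exp (t * ω k + (1 - t) * ω' k)
        = ∑ k, (a k) ^ t * (b k) ^ (1 - t) := Finset.sum_congr rfl fun k _ => hmid k
      _ < _ := aux_holder_strict a b ha hb ht j hj
  calc Real.log (∑ k, c k * Real.exp (t * ω k + (1 - t) * ω' k))
      < Real.log ((∑ k, a k) ^ t * (∑ k, b k) ^ (1 - t)) := Real.log_lt_log hS hlt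
    _ = t * Real.log (∑ k, a k) + (1 - t) * Real.log (∑ k, b k) := by
        rw [Real.log_mul (Real.rpow_pos_of_pos hA t).ne' (Real.rpow_pos_of_pos hB (1-t)).ne',
          Real.log_rpow hA, Real.log_rpow hB]

lemma aux_gaussDen_pos {d : ℕ} {σ : ℝ} (hσ : 0 < σ) (μ y : EuclideanSpace ℝ (Fin d)) :
    0 < gaussDen d σ μ y :=
  mul_pos (Real.rpow_pos_of_pos (by positivity) _) (Real.exp_pos _)

lemma aux_gaussDen_le {d : ℕ} {σ : ℝ} (hσ : 0 < σ) (μ y : EuclideanSpace ℝ (Fin d)) :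
    gaussDen d σ μ y ≤ (2 * Real.pi * σ ^ 2) ^ (-(d : ℝ) / 2) := by
  have h1 : Real.exp (-‖y - μ‖ ^ 2 / (2 * σ ^ 2)) ≤ 1 := by
    rw [Real.exp_le_one_iff]
    apply div_nonpos_of_nonpos_of_nonneg
    · simp [sq_nonneg]
    · positivity
  calc gaussDen d σ μ y ≤ (2 * Real.pi * σ ^ 2) ^ (-(d : ℝ) / 2) * 1 := by
        apply mul_le_mul_of_nonneg_left h1 (Real.rpow_pos_of_pos (by positivity) _).le
    _ = _ := mul_one _

lemma aux_gaussDen_continuous {d : ℕ} (σ : ℝ) (μ : EuclideanSpace ℝ (Fin d)) :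
    Continuous (fun y => gaussDen d σ μ y) := by
  unfold gaussDen
  fun_prop

/-- Integrability of the log-density term. -/
lemma aux_integrable_logsum {K d : ℕ} {σ : ℝ} (hσ : 0 < σ) (α : Fin K → ℝ)
    (hα : ∀ k, 0 < α k) (k0 : Fin K)
    (Q : Measure (EuclideanSpace ℝ (Fin d))) [IsProbabilityMeasure Q]
    (hQ : Integrable (fun y => ‖y‖ ^ 2) Q)
    (θ : Fin K → EuclideanSpace ℝ (Fin d)) (ω : Fin K → ℝ) :
    Integrable (fun y => Real.log (∑ k, α k * Real.exp (ω k) * gaussDen d σ (θ k) y)) Q := by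
  set C : ℝ := (2 * Real.pi * σ ^ 2) ^ (-(d : ℝ) / 2) with hC_def
  have hC : 0 < C := Real.rpow_pos_of_pos (by positivity) _
  set S : EuclideanSpace ℝ (Fin d) → ℝ :=
    fun y => ∑ k, α k * Real.exp (ω k) * gaussDen d σ (θ k) y with hSdef
  have hS : ∀ y, 0 < S y := fun y =>
    Finset.sum_pos
      (fun k _ => mul_pos (mul_pos (hα k) (Real.exp_pos _)) (aux_gaussDen_pos hσ _ _))
      ⟨k0, Finset.mem_univ k0⟩
  have hScont : Continuous S := by
    apply continuous_finset_sum
    intro k _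
    exact continuous_const.mul (aux_gaussDen_continuous σ (θ k))
  have hmeas : AEStronglyMeasurable (fun y => Real.log (S y)) Q :=
    (Real.measurable_log.comp hScont.measurable).aestronglyMeasurable
  set T : ℝ := ∑ k : Fin K, α k * Real.exp (ω k) * C with hT_def
  have hT : 0 < T :=
    Finset.sum_pos (fun k _ => mul_pos (mul_pos (hα k) (Real.exp_pos _)) hC)
      ⟨k0, Finset.mem_univ k0⟩
  set E : ℝ := Real.log (α k0 * Real.exp (ω k0) * C) with hE_def
  set D : ℝ := |Real.log T| + |E| + ‖θ k0‖ ^ 2 / σ ^ 2 with hD_def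
  have hupper : ∀ y, Real.log (S y) ≤ Real.log T := by
    intro y
    apply Real.log_le_log (hS y)
    apply Finset.sum_le_sum
    intro k _
    exact mul_le_mul_of_nonneg_left (aux_gaussDen_le hσ _ _)
      (mul_pos (hα k) (Real.exp_pos _)).le
  have hlower : ∀ y, E - ‖y - θ k0‖ ^ 2 / (2 * σ ^ 2) ≤ Real.log (S y) := by
    intro y
    have h1 : α k0 * Real.exp (ω k0) * gaussDen d σ (θ k0) y ≤ S y := by
      apply Finset.single_le_sum
        (f := fun k => α k * Real.exp (ω k) * gaussDen d σ (θ k) y)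
      · intro k _
        exact le_of_lt (mul_pos (mul_pos (hα k) (Real.exp_pos _)) (aux_gaussDen_pos hσ _ _))
      · exact Finset.mem_univ k0
    have hg : gaussDen d σ (θ k0) y = C * Real.exp (-‖y - θ k0‖ ^ 2 / (2 * σ ^ 2)) := rfl
    have h2 : Real.log (α k0 * Real.exp (ω k0) * gaussDen d σ (θ k0) y)
        = E - ‖y - θ k0‖ ^ 2 / (2 * σ ^ 2) := by
      rw [hg, show α k0 * Real.exp (ω k0) * (C * Real.exp (-‖y - θ k0‖ ^ 2 / (2 * σ ^ 2)))
          = (α k0 * Real.exp (ω k0) * C) * Real.exp (-‖y - θ k0‖ ^ 2 / (2 * σ ^ 2)) by ring,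
        Real.log_mul (mul_pos (mul_pos (hα k0) (Real.exp_pos _)) hC).ne'
          (Real.exp_pos _).ne', Real.log_exp]
      ring
    rw [← h2]
    exact Real.log_le_log
      (mul_pos (mul_pos (hα k0) (Real.exp_pos _)) (aux_gaussDen_pos hσ _ _)) h1
  have hbound : ∀ y, |Real.log (S y)| ≤ D + ‖y‖ ^ 2 / σ ^ 2 := by
    intro y
    have hnorm : ‖y - θ k0‖ ^ 2 ≤ 2 * ‖y‖ ^ 2 + 2 * ‖θ k0‖ ^ 2 := by
      have h := norm_sub_le y (θ k0)
      have h2 := pow_le_pow_left₀ (norm_nonneg (y - θ k0)) h 2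
      nlinarith [sq_nonneg (‖y‖ - ‖θ k0‖)]
    rw [abs_le]
    constructor
    · have := hlower y
      have h2 : ‖y - θ k0‖ ^ 2 / (2 * σ ^ 2) ≤ ‖y‖ ^ 2 / σ ^ 2 + ‖θ k0‖ ^ 2 / σ ^ 2 := by
        rw [← add_div, div_le_div_iff₀ (by positivity) (by positivity)]
        nlinarith [sq_nonneg σ]
      have h3 : -|E| ≤ E := neg_abs_le E
      have h4 : (0:ℝ) ≤ |Real.log T| := abs_nonneg _
      simp only [hD_def]
      linarith
    · have := hupper y
      have h4 : Real.log T ≤ |Real.log T| := le_abs_self _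
      have h5 : (0:ℝ) ≤ |E| := abs_nonneg _
      have h6 : (0:ℝ) ≤ ‖θ k0‖ ^ 2 / σ ^ 2 := by positivity
      have h7 : (0:ℝ) ≤ ‖y‖ ^ 2 / σ ^ 2 := by positivity
      simp only [hD_def]
      linarith
  have hG : Integrable (fun y => D + ‖y‖ ^ 2 / σ ^ 2) Q :=
    (integrable_const D).add (hQ.div_const (σ ^ 2))
  exact hG.mono' hmeas (Filter.Eventually.of_forall fun y => by
    rw [Real.norm_eq_abs]; exact hbound y)

/-- for each fixed `θ`, the semi-dual objective `ω ↦ 𝓛̃(θ, ω)` is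
strictly concave on the hyperplane `{ω : ω_K = 0}`. -/
theorem semiDual_strictConcaveOn_hyperplane
    (K d : ℕ) (hK : 2 ≤ K) (hd : 1 ≤ d) (σ : ℝ) (hσ : 0 < σ)
    (α : Fin K → ℝ) (hα : ∀ k, α k ∈ Set.Ioo (0 : ℝ) 1) (hαsum : ∑ k, α k = 1)
    (Q : Measure (EuclideanSpace ℝ (Fin d))) [IsProbabilityMeasure Q]
    (hQ : Integrable (fun y => ‖y‖ ^ 2) Q)
    (θ : Fin K → EuclideanSpace ℝ (Fin d))
    (ω ω' : Fin K → ℝ) (hne : ω ≠ ω')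
    (hω : ω ⟨K - 1, by omega⟩ = 0) (hω' : ω' ⟨K - 1, by omega⟩ = 0)
    (t : ℝ) (ht : t ∈ Set.Ioo (0 : ℝ) 1) :
    t * semiDual K d σ α Q θ ω + (1 - t) * semiDual K d σ α Q θ ω'
      < semiDual K d σ α Q θ (t • ω + (1 - t) • ω') := by
  have hα' : ∀ k, 0 < α k := fun k => (hα k).1
  set k0 : Fin K := ⟨K - 1, by omega⟩ with hk0_def
  set m : Fin K → ℝ := t • ω + (1 - t) • ω' with hm_def
  have hmk : ∀ k, m k = t * ω k + (1 - t) * ω' k := fun k => by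
    simp [hm_def, Pi.add_apply, Pi.smul_apply, smul_eq_mul]
  -- the three integrands
  set f : (Fin K → ℝ) → EuclideanSpace ℝ (Fin d) → ℝ :=
    fun v y => Real.log (∑ k, α k * Real.exp (v k) * gaussDen d σ (θ k) y) with hf_def
  have hint : ∀ v, Integrable (f v) Q := fun v =>
    aux_integrable_logsum hσ α hα' k0 Q hQ θ v
  -- pointwise strict inequality
  have hpt : ∀ y, f m y < t * f ω y + (1 - t) * f ω' y := by
    intro y
    have hc : ∀ k, 0 < α k * gaussDen d σ (θ k) y :=
      fun k => mul_pos (hα' k) (aux_gaussDen_pos hσ _ _)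
    have hrw : ∀ (v : Fin K → ℝ),
        (∑ k, α k * Real.exp (v k) * gaussDen d σ (θ k) y)
          = ∑ k, (α k * gaussDen d σ (θ k) y) * Real.exp (v k) := by
      intro v; exact Finset.sum_congr rfl fun k _ => by ring
    simp only [hf_def, hrw]
    have := aux_logsum_strict (fun k => α k * gaussDen d σ (θ k) y) hc ω ω' hne k0
      (by rw [hω, hω']) ht
    calc Real.log (∑ k, (α k * gaussDen d σ (θ k) y) * Real.exp (m k))
        = Real.log (∑ k, (α k * gaussDen d σ (θ k) y)
            * Real.exp (t * ω k + (1 - t) * ω' k)) := by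
          exact congrArg Real.log (Finset.sum_congr rfl fun k _ => by rw [hmk k])
      _ < _ := this
  -- strict inequality of integrals
  have hintlt : ∫ y, f m y ∂Q < t * ∫ y, f ω y ∂Q + (1 - t) * ∫ y, f ω' y ∂Q := by
    set g : EuclideanSpace ℝ (Fin d) → ℝ :=
      fun y => t * f ω y + (1 - t) * f ω' y - f m y with hg_def
    have hgint : Integrable g Q :=
      (((hint ω).const_mul t).add ((hint ω').const_mul (1 - t))).sub (hint m)
    have hgpos : ∀ y, 0 < g y := fun y => by
      have := hpt y; simp only [hg_def]; linarith
    have h0 : 0 < ∫ y, g y ∂Q := by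
      rw [integral_pos_iff_support_of_nonneg (fun y => (hgpos y).le) hgint]
      have : Function.support g = Set.univ := by
        ext y; simp [Function.mem_support, (hgpos y).ne']
      rw [this]
      simp [IsProbabilityMeasure.measure_univ]
    have heq : ∫ y, g y ∂Q
        = t * ∫ y, f ω y ∂Q + (1 - t) * ∫ y, f ω' y ∂Q - ∫ y, f m y ∂Q := by
      have h1 : Integrable (fun y => t * f ω y + (1 - t) * f ω' y) Q :=
        ((hint ω).const_mul t).add ((hint ω').const_mul (1 - t))
      rw [hg_def]
      rw [show (fun y => t * f ω y + (1 - t) * f ω' y - f m y)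
          = fun y => (fun y => t * f ω y + (1 - t) * f ω' y) y - f m y from rfl]
      rw [integral_sub h1 (hint m),
        integral_add ((hint ω).const_mul t) ((hint ω').const_mul (1 - t)),
        integral_const_mul, integral_const_mul]
    linarith [heq ▸ h0]
  -- linear part
  have hlin : ∑ k, α k * m k = t * ∑ k, α k * ω k + (1 - t) * ∑ k, α k * ω' k := by
    rw [Finset.mul_sum, Finset.mul_sum, ← Finset.sum_add_distrib]
    exact Finset.sum_congr rfl fun k _ => by rw [hmk k]; ring
  simp only [semiDual]
  have e1 : (∫ y, Real.log (∑ k, α k * Real.exp (m k) * gaussDen d σ (θ k) y) ∂Q)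
      = ∫ y, f m y ∂Q := rfl
  have e2 : (∫ y, Real.log (∑ k, α k * Real.exp (ω k) * gaussDen d σ (θ k) y) ∂Q)
      = ∫ y, f ω y ∂Q := rfl
  have e3 : (∫ y, Real.log (∑ k, α k * Real.exp (ω' k) * gaussDen d σ (θ k) y) ∂Q)
      = ∫ y, f ω' y ∂Q := rfl
  rw [e1, e2, e3, hlin]
  linarith
end
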